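/- For every Tamari interval-poset ≺ of size n there exist permutations σ and τ of {1,…,n} such that: σ avoids the pattern 312, τ avoids the pattern 132, inv(σ) ⊆ inv(τ), and a permutation μ of {1,…,n} is a linear extension of ≺ if and only if inv(σ) ⊆ inv(μ) ⊆ inv(τ). In particular, the linear extensions of a Tamari interval-poset form a nonempty interval of the right weak order. -/

import Mathlib

lemma exists_perm_invSet (n : ℕ) (S : Fin n → Fin n → Prop)
    (h1 : ∀ a b c : Fin n, a < b → b < c → S a b → S b c → S a c)
    (h2 : ∀ a b c : Fin n, a < b → b < c → S a c → S a b ∨ S b c) :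
    ∃ μ : Equiv.Perm (Fin n), ∀ a b : Fin n,
      (a < b ∧ μ⁻¹ b < μ⁻¹ a) ↔ (a < b ∧ S a b) := by
  classical
  set lt' : Fin n → Fin n → Prop :=
    fun x y => (x < y ∧ ¬ S x y) ∨ (y < x ∧ S y x) with hlt'
  have irr : ∀ x, ¬ lt' x x := by
    rintro x (⟨h, -⟩ | ⟨h, -⟩) <;> exact lt_irrefl _ h
  have tri : ∀ x y, lt' x y ∨ x = y ∨ lt' y x := by
    intro x y
    rcases lt_trichotomy x y with h | h | h
    · by_cases hs : S x y
      · exact Or.inr (Or.inr (Or.inr ⟨h, hs⟩))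
      · exact Or.inl (Or.inl ⟨h, hs⟩)
    · exact Or.inr (Or.inl h)
    · by_cases hs : S y x
      · exact Or.inl (Or.inr ⟨h, hs⟩)
      · exact Or.inr (Or.inr (Or.inl ⟨h, hs⟩))
  have tr : ∀ x y z, lt' x y → lt' y z → lt' x z := by
    rintro x y z (⟨hxy, hs1⟩ | ⟨hyx, hs1⟩) (⟨hyz, hs2⟩ | ⟨hzy, hs2⟩)
    · -- x<y, ¬Sxy ; y<z, ¬Syz
      refine Or.inl ⟨hxy.trans hyz, fun hxz => ?_⟩
      rcases h2 x y z hxy hyz hxz with h | h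
      exacts [hs1 h, hs2 h]
    · -- x<y, ¬Sxy ; z<y, Szy
      rcases lt_trichotomy x z with h | h | h
      · refine Or.inl ⟨h, fun hxz => hs1 (h1 x z y h hzy hxz hs2)⟩
      · subst h; exact absurd hs2 hs1
      · -- z<x<y, Szy: S z x ∨ S x y; ¬S x y so S z x
        rcases h2 z x y h hxy hs2 with hzx | hxy'
        · exact Or.inr ⟨h, hzx⟩
        · exact absurd hxy' hs1
    · -- y<x, Syx ; y<z, ¬Syz
      rcases lt_trichotomy x z with h | h | h
      · refine Or.inl ⟨h, fun hxz => hs2 (h1 y x z hyx h hs1 hxz)⟩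
      · subst h; exact absurd hs1 hs2
      · rcases h2 y z x hyz h hs1 with hyz' | hzx
        · exact absurd hyz' hs2
        · exact Or.inr ⟨h, hzx⟩
    · -- y<x, Syx ; z<y, Szy
      exact Or.inr ⟨hzy.trans hyx, h1 z y x hzy hyx hs2 hs1⟩
  letI : DecidableRel lt' := fun a b => Classical.dec _
  haveI : IsStrictTotalOrder (Fin n) lt' :=
    { irrefl := irr, trans := tr, trichotomous := fun a b h1 h2 => by
        rcases tri a b with h | h | h
        exacts [absurd h h1, h, absurd h h2] }
  letI L : LinearOrder (Fin n) := linearOrderOfSTO lt'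
  have f := @monoEquivOfFin (Fin n) _ L n (by simp)
  refine ⟨f.toEquiv, fun a b => ?_⟩
  have hle : ∀ p q : Fin n, (f.toEquiv p = f.toEquiv q ∨ lt' (f.toEquiv p) (f.toEquiv q)) ↔ p ≤ q :=
    fun p q => f.map_rel_iff
  have hne : ∀ x y : Fin n, lt' x y → x ≠ y := by
    rintro x y h rfl; exact irr x h
  have key : ∀ x y : Fin n, f.toEquiv⁻¹ x < f.toEquiv⁻¹ y ↔ lt' x y := by
    intro x y
    have hx : f.toEquiv (f.toEquiv⁻¹ x) = x := Equiv.apply_symm_apply f.toEquiv x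
    have hy : f.toEquiv (f.toEquiv⁻¹ y) = y := Equiv.apply_symm_apply f.toEquiv y
    constructor
    · intro h
      have h2' := (hle _ _).mpr h.le
      rw [hx, hy] at h2'
      rcases h2' with h' | h'
      · exact absurd (congrArg f.toEquiv.symm h') (by simpa using h.ne)
      · exact h'
    · intro h
      have hle' := (hle (f.toEquiv⁻¹ x) (f.toEquiv⁻¹ y)).mp (by rw [hx, hy]; exact Or.inr h)
      exact lt_of_le_of_ne hle' (fun he => hne x y h (by rw [← hx, ← hy, he]))
  constructor
  · rintro ⟨hab, hinv⟩
    rcases (key b a).mp hinv with ⟨h, -⟩ | ⟨-, hs⟩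
    · exact absurd hab (asymm h)
    · exact ⟨hab, hs⟩
  · rintro ⟨hab, hs⟩
    exact ⟨hab, (key b a).mpr (Or.inr ⟨hab, hs⟩)⟩



/-- A Tamari interval-poset of size `n`. -/
def IsTamariIntervalPoset (n : ℕ) (r : Fin n → Fin n → Prop) : Prop :=
  IsPartialOrder (Fin n) r ∧
    (∀ a b c : Fin n, a < b → b < c → r a c → r b c) ∧
    (∀ a b c : Fin n, a < b → b < c → r c a → r b a)

/-- The set of (value) inversions of a permutation `σ` of `{1,…,n}`:
pairs `(a,b)` with `a < b` such that `b` appears before `a` in the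
one-line notation of `σ`. -/
def invSet (n : ℕ) (σ : Equiv.Perm (Fin n)) : Set (Fin n × Fin n) :=
  {p | p.1 < p.2 ∧ σ⁻¹ p.2 < σ⁻¹ p.1}

/-- `σ` avoids the pattern 312: no positions `p < q < r` with `σ q < σ r < σ p`. -/
def Avoids312 (n : ℕ) (σ : Equiv.Perm (Fin n)) : Prop :=
  ¬ ∃ p q r : Fin n, p < q ∧ q < r ∧ σ q < σ r ∧ σ r < σ p

/-- `σ` avoids the pattern 132: no positions `p < q < r` with `σ p < σ r < σ q`. -/
def Avoids132 (n : ℕ) (σ : Equiv.Perm (Fin n)) : Prop :=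
  ¬ ∃ p q r : Fin n, p < q ∧ q < r ∧ σ p < σ r ∧ σ r < σ q

/-- `μ` is a linear extension of the relation `r`:
whenever `x ≺ y` with `x ≠ y`, `x` appears before `y` in `μ`. -/
def IsLinearExtension (n : ℕ) (r : Fin n → Fin n → Prop) (μ : Equiv.Perm (Fin n)) : Prop :=
  ∀ x y : Fin n, r x y → x ≠ y → μ⁻¹ x < μ⁻¹ y

/-- For every Tamari interval-poset `r` of size `n` there are permutations `σ`
(avoiding 312) and `τ` (avoiding 132) with `inv(σ) ⊆ inv(τ)` such that the linear
extensions of `r` are exactly the weak-order interval `[σ,τ]`: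
`μ` is a linear extension of `r` iff `inv(σ) ⊆ inv(μ) ⊆ inv(τ)`. -/
theorem tamari_interval_poset_linear_extensions (n : ℕ) (r : Fin n → Fin n → Prop)
    (hr : IsTamariIntervalPoset n r) :
    ∃ σ τ : Equiv.Perm (Fin n), Avoids312 n σ ∧ Avoids132 n τ ∧
      invSet n σ ⊆ invSet n τ ∧
      ∀ μ : Equiv.Perm (Fin n),
        IsLinearExtension n r μ ↔ (invSet n σ ⊆ invSet n μ ∧ invSet n μ ⊆ invSet n τ) := by
  obtain ⟨hpo, hax1, hax2⟩ := hr
  -- σ : inversion set D = {(a,b) : a<b, r b a}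
  obtain ⟨σ, hσ⟩ := exists_perm_invSet n (fun a b => r b a)
    (fun a b c hab hbc h1 h2 => hpo.trans _ _ _ h2 h1)
    (fun a b c hab hbc h => Or.inl (hax2 a b c hab hbc h))
  -- τ : inversion set T = {(a,b) : a<b, ¬ r a b}
  obtain ⟨τ, hτ⟩ := exists_perm_invSet n (fun a b => ¬ r a b)
    (fun a b c hab hbc h1 h2 hac => h2 (hax1 a b c hab hbc hac))
    (fun a b c hab hbc h => by
      by_cases hab' : r a b
      · exact Or.inr (fun hbc' => h (hpo.trans _ _ _ hab' hbc'))
      · exact Or.inl hab')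
  have hσmem : ∀ a b : Fin n, (a, b) ∈ invSet n σ ↔ a < b ∧ r b a := fun a b => hσ a b
  have hτmem : ∀ a b : Fin n, (a, b) ∈ invSet n τ ↔ a < b ∧ ¬ r a b := fun a b => hτ a b
  refine ⟨σ, τ, ?_, ?_, ?_, ?_⟩
  · -- Avoids312
    rintro ⟨p, q, q', hpq, hqr, h1, h2⟩
    have hxz : (σ q, σ p) ∈ invSet n σ := ⟨h1.trans h2, by simpa using hpq⟩
    have hxy : (σ q, σ q') ∉ invSet n σ := by
      rintro ⟨-, hlt⟩
      simp only [Equiv.Perm.inv_def, Equiv.symm_apply_apply] at hlt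
      exact absurd hqr (asymm hlt)
    have hr1 : r (σ p) (σ q) := ((hσmem _ _).mp hxz).2
    exact hxy ((hσmem _ _).mpr ⟨h1, hax2 (σ q) (σ q') (σ p) h1 h2 hr1⟩)
  · -- Avoids132
    rintro ⟨p, q, q', hpq, hqr, h1, h2⟩
    have hyz : (τ q', τ q) ∈ invSet n τ := ⟨h2, by simpa using hqr⟩
    have hxz : (τ p, τ q) ∉ invSet n τ := by
      rintro ⟨-, hlt⟩
      simp only [Equiv.Perm.inv_def, Equiv.symm_apply_apply] at hlt
      exact absurd hpq (asymm hlt)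
    have hr1 : ¬ r (τ q') (τ q) := ((hτmem _ _).mp hyz).2
    have : r (τ p) (τ q) := by
      by_contra hc
      exact hxz ((hτmem _ _).mpr ⟨h1.trans h2, hc⟩)
    exact hr1 (hax1 (τ p) (τ q') (τ q) h1 h2 this)
  · -- invSet σ ⊆ invSet τ
    rintro ⟨a, b⟩ hab
    obtain ⟨h1, h2⟩ := (hσmem a b).mp hab
    exact (hτmem a b).mpr ⟨h1, fun hc => absurd (hpo.antisymm _ _ hc h2) (ne_of_lt h1)⟩
  · -- equivalence
    intro μ
    constructor
    · intro hlin
      constructor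
      · rintro ⟨a, b⟩ hab
        obtain ⟨h1, h2⟩ := (hσmem a b).mp hab
        exact ⟨h1, hlin b a h2 (ne_of_gt h1)⟩
      · rintro ⟨a, b⟩ ⟨h1, h2⟩
        refine (hτmem a b).mpr ⟨h1, fun hc => ?_⟩
        exact absurd (hlin a b hc (ne_of_lt h1)) (asymm h2)
    · rintro ⟨hσμ, hμτ⟩ x y hxy hne
      rcases lt_trichotomy x y with h | h | h
      · by_contra hc
        have hlt : μ⁻¹ y < μ⁻¹ x :=
          lt_of_le_of_ne (not_lt.mp hc) (fun he => hne (μ⁻¹.injective he).symm)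
        have : (x, y) ∈ invSet n τ := hμτ ⟨h, hlt⟩
        exact ((hτmem x y).mp this).2 hxy
      · exact absurd h hne
      · exact (hσμ ((hσmem y x).mpr ⟨h, hxy⟩)).2
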